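/- Let T be a countable tree with ∂T ≠ ∅ and let Γ be a countable group acting on T by tree automorphisms. If the action of Γ on T is slender, then the induced action of Γ on ∂T is strongly faithful. -/

import Mathlib

open Filter Set

section PowersDefs

/-- A Powers group: for every finite `F ⊆ Γ \ {1}` and every `N ≥ 1` there is a partition
`Γ = C ⊔ D` (here `D = Cᶜ`) and elements `g 1, …, g N` with `fC ∩ C = ∅` for `f ∈ F` and
`g j D ∩ g k D = ∅` for `j ≠ k`. -/
def IsPowersGroup (Γ : Type*) [Group Γ] : Prop :=
  Nontrivial Γ ∧
    ∀ F : Finset Γ, (1 : Γ) ∉ F → ∀ N : ℕ, 1 ≤ N →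
      ∃ (C : Set Γ) (g : Fin N → Γ),
        (∀ f ∈ F, (fun x => f * x) '' C ∩ C = ∅) ∧
        ∀ j k : Fin N, j ≠ k →
          (fun x => g j * x) '' Cᶜ ∩ (fun x => g k * x) '' Cᶜ = ∅

/-- A subgroup is subnormal if there is a finite chain of successively normal subgroups
reaching the whole group. -/
def IsSubnormalIn {Γ : Type*} [Group Γ] (N : Subgroup Γ) : Prop :=
  ∃ (k : ℕ) (c : ℕ → Subgroup Γ), c 0 = N ∧ c k = ⊤ ∧
    ∀ i < k, c i ≤ c (i + 1) ∧ ∀ x ∈ c (i + 1), ∀ y ∈ c i, x * y * x⁻¹ ∈ c i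

/-- A strongly Powers group: every nontrivial subnormal subgroup is a Powers group. -/
def IsStronglyPowersGroup (Γ : Type*) [Group Γ] : Prop :=
  ∀ N : Subgroup Γ, IsSubnormalIn N → N ≠ ⊥ → IsPowersGroup N

end PowersDefs

section TreeDefs

variable {V : Type*}

/-- A ray in a graph: a sequence of vertices with `d(x m, x n) = |m - n|`. -/
def IsRay (G : SimpleGraph V) (x : ℕ → V) : Prop :=
  ∀ m n : ℕ, G.dist (x m) (x n) = ((m : ℤ) - (n : ℤ)).natAbs

/-- Two rays are cofinal if up to an index shift they eventually coincide. -/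
def Cofinal (x y : ℕ → V) : Prop :=
  ∃ a b : ℕ, ∀ᶠ n in atTop, y (n + a) = x (n + b)

/-- The type of rays of a graph. -/
def Ray (G : SimpleGraph V) : Type _ := {x : ℕ → V // IsRay G x}

/-- The boundary of a tree: cofinality classes of rays. -/
def Boundary (G : SimpleGraph V) : Type _ :=
  Quot (fun r s : Ray G => Cofinal r.1 s.1)

/-- The boundary point represented by a ray. -/
def Boundary.mk (G : SimpleGraph V) (r : Ray G) : Boundary G := Quot.mk _ r

/-- The shadow of the oriented edge `(u, v)`: boundary points represented by rays that are
eventually strictly closer to `v` than to `u`. -/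
def Shadow (G : SimpleGraph V) (u v : V) : Set (Boundary G) :=
  {ξ | ∃ r : Ray G, Boundary.mk G r = ξ ∧
    ∀ᶠ n in atTop, G.dist v (r.1 n) < G.dist u (r.1 n)}

/-- The shadow topology on the boundary of a tree. -/
instance (G : SimpleGraph V) : TopologicalSpace (Boundary G) :=
  TopologicalSpace.generateFrom {s | ∃ u v : V, G.Adj u v ∧ s = Shadow G u v}

/-- The action of `Γ` on the vertices is by graph automorphisms. -/
def IsGraphAction (G : SimpleGraph V) (Γ : Type*) [Group Γ] [MulAction Γ V] : Prop :=
  ∀ (γ : Γ) (u v : V), G.Adj u v ↔ G.Adj (γ • u) (γ • v)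

variable {Γ : Type*} [Group Γ] [MulAction Γ V]

theorem dist_smul_eq {G : SimpleGraph V} (h : IsGraphAction G Γ) (γ : Γ) (u v : V) :
    G.dist (γ • u) (γ • v) = G.dist u v := by
  have key : ∀ (g : Γ) (a b : V), G.dist (g • a) (g • b) ≤ G.dist a b := by
    intro g a b
    by_cases hr : G.Reachable a b
    · obtain ⟨w, hw⟩ := hr.exists_walk_length_eq_dist
      have hle : G.dist (g • a) (g • b) ≤
          (w.map ⟨fun x => g • x, fun hx => (h g _ _).mp hx⟩).length :=
        SimpleGraph.dist_le _
      rwa [SimpleGraph.Walk.length_map, hw] at hle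
    · have hr2 : ¬ G.Reachable (g • a) (g • b) := by
        intro hc
        refine hr ?_
        have h' := hc.map (⟨fun x => g⁻¹ • x, fun hx => (h g⁻¹ _ _).mp hx⟩ : G →g G)
        have h'' : G.Reachable (g⁻¹ • (g • a)) (g⁻¹ • (g • b)) := h'
        simpa using h''
      rw [SimpleGraph.dist_eq_zero_of_not_reachable hr,
        SimpleGraph.dist_eq_zero_of_not_reachable hr2]
  refine le_antisymm (key γ u v) ?_
  have h2 := key γ⁻¹ (γ • u) (γ • v)
  simpa using h2

/-- The image of a ray under an automorphism. -/
def raySmul {G : SimpleGraph V} (h : IsGraphAction G Γ) (γ : Γ) (r : Ray G) : Ray G :=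
  ⟨fun n => γ • r.1 n, fun m n => by rw [dist_smul_eq h]; exact r.2 m n⟩

/-- The induced action of an automorphism on the boundary. -/
def Boundary.smul {G : SimpleGraph V} (h : IsGraphAction G Γ) (γ : Γ) :
    Boundary G → Boundary G :=
  Quot.map (raySmul h γ) (by
    rintro r s ⟨a, b, hab⟩
    exact ⟨a, b, hab.mono fun n hn => by simp only [raySmul, hn]⟩)

/-- The fixed-point set of `γ` on the boundary. -/
def FixedBoundary {G : SimpleGraph V} (h : IsGraphAction G Γ) (γ : Γ) :
    Set (Boundary G) :=
  {ξ | Boundary.smul h γ ξ = ξ}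

/-- A slender action: every nontrivial element has a fixed-point set with empty interior in
the boundary. -/
def SlenderAction {G : SimpleGraph V} (h : IsGraphAction G Γ) : Prop :=
  ∀ γ : Γ, γ ≠ 1 → interior (FixedBoundary h γ) = ∅

/-- A minimal action on a tree: no nonempty proper invariant subtree. -/
def MinimalTreeAction (G : SimpleGraph V) (Γ : Type*) [Group Γ] [MulAction Γ V] : Prop :=
  ∀ S : Set V, S.Nonempty → (∀ (γ : Γ), ∀ v ∈ S, γ • v ∈ S) →
    (G.induce S).Connected → S = Set.univ

/-- An inversion of a graph. -/
def IsInversionAut (G : SimpleGraph V) (γ : Γ) : Prop :=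
  ∃ u v : V, G.Adj u v ∧ γ • u = v ∧ γ • v = u

/-- An elliptic automorphism: one fixing a vertex. -/
def IsEllipticAut (V : Type*) [MulAction Γ V] (γ : Γ) : Prop := ∃ v : V, γ • v = v

/-- A hyperbolic automorphism: neither elliptic nor an inversion. -/
def IsHyperbolicAut (G : SimpleGraph V) (γ : Γ) : Prop :=
  ¬ IsEllipticAut V γ ∧ ¬ IsInversionAut G γ

/-- The axis of an automorphism: the set of vertices minimizing the displacement
`d(x, γ x)`. -/
def Axis (G : SimpleGraph V) (γ : Γ) : Set V :=
  {x : V | ∀ y : V, G.dist x (γ • x) ≤ G.dist y (γ • y)}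

/-- Two automorphisms are transverse if the intersection of their axes is finite. -/
def Transverse (G : SimpleGraph V) (γ δ : Γ) : Prop :=
  (Axis G γ ∩ Axis G δ).Finite

/-- A strongly hyperbolic action on a tree: it admits a pair of transverse hyperbolic
elements. -/
def StronglyHyperbolicTreeAction (G : SimpleGraph V) (Γ : Type*) [Group Γ] [MulAction Γ V] :
    Prop :=
  ∃ γ δ : Γ, IsHyperbolicAut G γ ∧ IsHyperbolicAut G δ ∧ Transverse G γ δ

/-- A pending ray: a ray whose vertices eventually all have degree two. -/
def IsPendingRay (G : SimpleGraph V) (x : ℕ → V) : Prop :=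
  IsRay G x ∧ ∀ᶠ n in atTop, (G.neighborSet (x n)).ncard = 2

/-- A linear tree: its vertex set is an enumeration `(x n), n ∈ ℤ` with
`d(x m, x n) = |m - n|`. -/
def IsLinearTree (G : SimpleGraph V) : Prop :=
  ∃ x : ℤ → V, Function.Surjective x ∧
    ∀ m n : ℤ, G.dist (x m) (x n) = (m - n).natAbs

end TreeDefs

section Statements

variable {V : Type*}


section TreeAuxSec

namespace TreeAux

variable {V : Type*} {G : SimpleGraph V}

/-- In a tree, every path realizes the distance. -/
theorem path_length (hT : G.IsTree) {a b : V} {p : G.Walk a b} (hp : p.IsPath) :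
    p.length = G.dist a b := by
  classical
  obtain ⟨w, hw⟩ := (hT.isConnected a b).exists_walk_length_eq_dist
  have hbp : w.bypass.IsPath := w.bypass_isPath
  have h1 : w.bypass.length ≤ w.length := SimpleGraph.Walk.length_bypass_le w
  have h2 : G.dist a b ≤ w.bypass.length := SimpleGraph.dist_le _
  have hpe : p.length = w.bypass.length := by
    rw [(hT.existsUnique_path a b).unique hp hbp]
  omega

theorem exists_path (hT : G.IsTree) (a b : V) :
    ∃ p : G.Walk a b, p.IsPath ∧ p.length = G.dist a b := by
  classical
  obtain ⟨w, hw⟩ := (hT.isConnected a b).exists_walk_length_eq_dist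
  exact ⟨w.bypass, w.bypass_isPath, path_length hT w.bypass_isPath⟩

/-- A vertex on the (unique) path splits the distance additively. -/
theorem dist_add_of_mem (hT : G.IsTree) {a b z : V} {p : G.Walk a b} (hp : p.IsPath)
    (hz : z ∈ p.support) : G.dist a z + G.dist z b = G.dist a b := by
  classical
  have hsplit := p.take_spec hz
  have hlen : (p.takeUntil z hz).length + (p.dropUntil z hz).length = p.length := by
    have h := congrArg SimpleGraph.Walk.length hsplit
    rwa [SimpleGraph.Walk.length_append] at h
  rw [path_length hT (hp.takeUntil hz), path_length hT (hp.dropUntil hz)] at hlen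
  rw [hlen, path_length hT hp]

theorem dist_eq_zero (hT : G.IsTree) {a b : V} (h : G.dist a b = 0) : a = b := by
  rcases SimpleGraph.dist_eq_zero_iff_eq_or_not_reachable.mp h with h' | h'
  · exact h'
  · exact absurd (hT.isConnected a b) h'

/-- Side lemma: distances from the endpoints of an edge to any vertex differ by exactly 1. -/
theorem side (hT : G.IsTree) {u v : V} (huv : G.Adj u v) (x : V) :
    G.dist u x = G.dist v x + 1 ∨ G.dist v x = G.dist u x + 1 := by
  classical
  obtain ⟨p, hp, hlen⟩ := exists_path hT v x
  by_cases hu : u ∈ p.support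
  · right
    have h := dist_add_of_mem hT hp hu
    have h1 : G.dist v u = 1 := SimpleGraph.dist_eq_one_iff_adj.mpr huv.symm
    omega
  · left
    have hc : (SimpleGraph.Walk.cons huv p).IsPath := hp.cons hu
    have h := path_length hT hc
    rw [SimpleGraph.Walk.length_cons] at h
    omega

/-- Crossing lemma: if `x` is on the `v`-side and `y` on the `u`-side of the edge `(u,v)`,
then the geodesic from `x` to `y` crosses the edge. -/
theorem cross (hT : G.IsTree) {u v x y : V} (huv : G.Adj u v)
    (hx : G.dist u x = G.dist v x + 1) (hy : G.dist v y = G.dist u y + 1) :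
    G.dist x y = G.dist v x + 1 + G.dist u y := by
  classical
  obtain ⟨p, hp, hplen⟩ := exists_path hT v x
  obtain ⟨q, hq, hqlen⟩ := exists_path hT u y
  have hunp : u ∉ p.support := by
    intro hu
    have h := dist_add_of_mem hT hp hu
    have h1 : G.dist v u = 1 := SimpleGraph.dist_eq_one_iff_adj.mpr huv.symm
    have h2 : G.dist u x ≤ G.dist u x + 2 := by omega
    omega
  have hvnq : v ∉ q.support := by
    intro hv
    have h := dist_add_of_mem hT hq hv
    have h1 : G.dist u v = 1 := SimpleGraph.dist_eq_one_iff_adj.mpr huv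
    omega
  have hdisj : ∀ z, z ∈ p.support → z ∈ q.support → False := by
    intro z hzp hzq
    have h1 := dist_add_of_mem hT hp hzp
    have h2 := dist_add_of_mem hT hq hzq
    rcases side hT huv z with h3 | h3
    · have h4 : G.dist v y ≤ G.dist v z + G.dist z y :=
        hT.isConnected.dist_triangle
      omega
    · have h4 : G.dist u x ≤ G.dist u z + G.dist z x :=
        hT.isConnected.dist_triangle
      omega
  -- assemble walk x → v → u → y
  set W := (SimpleGraph.Walk.cons huv p).reverse.append q with hW
  have hWpath : W.IsPath := by
    rw [SimpleGraph.Walk.isPath_def, SimpleGraph.Walk.support_append,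
      SimpleGraph.Walk.support_reverse, SimpleGraph.Walk.support_cons]
    rw [List.nodup_append]
    refine ⟨List.nodup_reverse.mpr ?_, ?_, ?_⟩
    · exact List.Nodup.cons (by simpa using hunp) hp.support_nodup
    · exact (List.nodup_cons.mp (by
        rw [← SimpleGraph.Walk.support_eq_cons]; exact hq.support_nodup)).2
    · intro z hz b hz' hzb
      rw [← hzb] at hz'
      have hz'' : z ∈ q.support.tail := hz'
      have hzq : z ∈ q.support := List.mem_of_mem_tail hz''
      have hnodq : q.support.Nodup := hq.support_nodup
      rcases List.mem_cons.mp (List.mem_reverse.mp hz) with h | h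
      · rw [h] at hz''
        have h5 : (u :: q.support.tail).Nodup := by
          rw [← SimpleGraph.Walk.support_eq_cons]; exact hnodq
        exact (List.nodup_cons.mp h5).1 hz''
      · exact hdisj z h hzq
  have hWlen : W.length = G.dist v x + 1 + G.dist u y := by
    rw [hW, SimpleGraph.Walk.length_append, SimpleGraph.Walk.length_reverse,
      SimpleGraph.Walk.length_cons]
    omega
  have := path_length hT hWpath
  omega

/-- Straddle lemma: an edge `(w,w')` crossing the edge `(u,v)` must equal it. -/
theorem straddle (hT : G.IsTree) {u v w w' : V} (huv : G.Adj u v)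
    (hw : G.dist u w = G.dist v w + 1) (hw' : G.dist v w' = G.dist u w' + 1)
    (hww' : G.Adj w w') : w = v ∧ w' = u := by
  have h := cross hT huv hw hw'
  have h1 : G.dist w w' = 1 := SimpleGraph.dist_eq_one_iff_adj.mpr hww'
  have h2 : G.dist v w = 0 := by omega
  have h3 : G.dist u w' = 0 := by omega
  exact ⟨(dist_eq_zero hT h2).symm, (dist_eq_zero hT h3).symm⟩

section Rays
variable {r s : ℕ → V}

theorem ray_adj (hr : IsRay G r) (n : ℕ) : G.Adj (r n) (r (n + 1)) := by
  have h := hr n (n + 1)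
  have : ((n : ℤ) - (n + 1 : ℕ)).natAbs = 1 := by push_cast; omega
  rw [this] at h
  exact SimpleGraph.dist_eq_one_iff_adj.mp h

theorem ray_dist (hr : IsRay G r) {m n : ℕ} (h : n ≤ m) : G.dist (r n) (r m) = m - n := by
  have h2 := hr n m
  have : ((n : ℤ) - (m : ℕ)).natAbs = m - n := by omega
  rw [this] at h2
  exact h2

/-- Propagation of increase: once moving away from `x` along a ray, keep moving away. -/
theorem ray_away (hT : G.IsTree) (hr : IsRay G r) (x : V) (n : ℕ)
    (h : G.dist x (r (n + 1)) = G.dist x (r n) + 1) :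
    G.dist x (r (n + 2)) = G.dist x (r (n + 1)) + 1 := by
  have c1 : G.dist x (r (n + 1)) = G.dist (r (n + 1)) x := SimpleGraph.dist_comm
  have c2 : G.dist x (r n) = G.dist (r n) x := SimpleGraph.dist_comm
  have hx : G.dist (r (n + 1)) x = G.dist (r n) x + 1 := by omega
  have hy : G.dist (r n) (r (n + 2)) = G.dist (r (n + 1)) (r (n + 2)) + 1 := by
    rw [ray_dist hr (by omega), ray_dist hr (by omega)]; omega
  have hc := cross hT (ray_adj hr n).symm hx hy
  have c3 : G.dist x (r (n + 2)) = G.dist (r (n + 2)) x := SimpleGraph.dist_comm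
  have c4 : G.dist (r (n + 1)) (r (n + 2)) = 1 := by rw [ray_dist hr (by omega)]; omega
  omega


/-- The rays diverge across step `n`. -/
def Div (G : SimpleGraph V) (r s : ℕ → V) (n : ℕ) : Prop :=
  G.dist (r (n + 1)) (s (n + 1)) = G.dist (r n) (s (n + 1)) + 1 ∧
  G.dist (r (n + 1)) (s (n + 1)) = G.dist (r (n + 1)) (s n) + 1

theorem div_succ (hT : G.IsTree) (hr : IsRay G r) (hs : IsRay G s) {n : ℕ}
    (h : Div G r s n) :
    Div G r s (n + 1) ∧
      G.dist (r (n + 2)) (s (n + 2)) = G.dist (r (n + 1)) (s (n + 1)) + 2 := by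
  obtain ⟨h1, h2⟩ := h
  have e1 : G.dist (s (n + 1)) (r (n + 2)) = G.dist (s (n + 1)) (r (n + 1)) + 1 := by
    have c1 : G.dist (s (n + 1)) (r (n + 1)) = G.dist (r (n + 1)) (s (n + 1)) :=
      SimpleGraph.dist_comm
    have c2 : G.dist (s (n + 1)) (r n) = G.dist (r n) (s (n + 1)) := SimpleGraph.dist_comm
    exact ray_away hT hr (s (n + 1)) n (by omega)
  have e2 : G.dist (r (n + 1)) (s (n + 2)) = G.dist (r (n + 1)) (s (n + 1)) + 1 :=
    ray_away hT hs (r (n + 1)) n h2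
  have hne : s (n + 1) ≠ r (n + 1) := by
    intro he
    rw [he] at h2
    have : G.dist (r (n + 1)) (r (n + 1)) = 0 := SimpleGraph.dist_self
    omega
  have B1 : G.dist (r (n + 2)) (s (n + 2)) = G.dist (r (n + 1)) (s (n + 2)) + 1 := by
    rcases side hT (ray_adj hr (n + 1)) (s (n + 2)) with hcase | hcase <;>
      rw [show n + 1 + 1 = n + 2 from rfl] at hcase
    · -- bad case: s (n+2) strictly closer to r (n+2)
      exfalso
      have hw : G.dist (r (n + 2)) (s (n + 1)) = G.dist (r (n + 1)) (s (n + 1)) + 1 := by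
        have c1 : G.dist (r (n + 2)) (s (n + 1)) = G.dist (s (n + 1)) (r (n + 2)) :=
          SimpleGraph.dist_comm
        have c2 : G.dist (r (n + 1)) (s (n + 1)) = G.dist (s (n + 1)) (r (n + 1)) :=
          SimpleGraph.dist_comm
        omega
      have := straddle hT (ray_adj hr (n + 1)).symm hw hcase (ray_adj hs (n + 1))
      exact hne this.1
    · have c1 : G.dist (s (n + 2)) (r (n + 1)) = G.dist (r (n + 1)) (s (n + 2)) :=
        SimpleGraph.dist_comm
      have c2 : G.dist (s (n + 2)) (r (n + 2)) = G.dist (r (n + 2)) (s (n + 2)) :=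
        SimpleGraph.dist_comm
      omega
  have B2 : G.dist (r (n + 2)) (s (n + 2)) = G.dist (r (n + 2)) (s (n + 1)) + 1 := by
    rcases side hT (ray_adj hs (n + 1)) (r (n + 2)) with hcase | hcase <;>
      rw [show n + 1 + 1 = n + 2 from rfl] at hcase
    · exfalso
      have hw : G.dist (s (n + 2)) (r (n + 1)) = G.dist (s (n + 1)) (r (n + 1)) + 1 := by
        have c1 : G.dist (s (n + 2)) (r (n + 1)) = G.dist (r (n + 1)) (s (n + 2)) :=
          SimpleGraph.dist_comm
        have c2 : G.dist (s (n + 1)) (r (n + 1)) = G.dist (r (n + 1)) (s (n + 1)) :=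
          SimpleGraph.dist_comm
        omega
      have hw' : G.dist (s (n + 1)) (r (n + 2)) = G.dist (s (n + 2)) (r (n + 2)) + 1 := by
        have c1 : G.dist (s (n + 1)) (r (n + 2)) = G.dist (r (n + 2)) (s (n + 1)) :=
          SimpleGraph.dist_comm
        have c2 : G.dist (s (n + 2)) (r (n + 2)) = G.dist (r (n + 2)) (s (n + 2)) :=
          SimpleGraph.dist_comm
        omega
      have := straddle hT (ray_adj hs (n + 1)).symm hw hw' (ray_adj hr (n + 1))
      exact hne this.1.symm
    · have c1 : G.dist (s (n + 2)) (r (n + 2)) = G.dist (r (n + 2)) (s (n + 2)) :=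
        SimpleGraph.dist_comm
      have c2 : G.dist (s (n + 1)) (r (n + 2)) = G.dist (r (n + 2)) (s (n + 1)) :=
        SimpleGraph.dist_comm
      omega
  exact ⟨⟨B1, B2⟩, by omega⟩

end Rays

theorem const_cofinal (hT : G.IsTree) :
    ∀ c : ℕ, ∀ r s : ℕ → V, IsRay G r → IsRay G s → ∀ N : ℕ,
      (∀ n, N ≤ n → G.dist (r n) (s n) = c) → Cofinal r s := by
  intro c
  induction c with
  | zero =>
    intro r s hr hs N h
    exact ⟨0, 0, eventually_atTop.mpr
      ⟨N, fun n hn => by simpa using (dist_eq_zero hT (h n hn)).symm⟩⟩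
  | succ c ih =>
    intro r s hr hs N h
    have hclass : ∀ n, N ≤ n →
        (G.dist (r (n + 1)) (s n) = c ∧ G.dist (r n) (s (n + 1)) = c + 2) ∨
        (G.dist (r (n + 1)) (s n) = c + 2 ∧ G.dist (r n) (s (n + 1)) = c) := by
      intro n hn
      have hD0 := h n hn
      have hD1 := h (n + 1) (by omega)
      have ha : G.dist (r (n + 1)) (s n) = c ∨ G.dist (r (n + 1)) (s n) = c + 2 := by
        rcases side hT (ray_adj hr n) (s n) with e | e <;> omega
      have hb : G.dist (r n) (s (n + 1)) = c ∨ G.dist (r n) (s (n + 1)) = c + 2 := by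
        have c1 : G.dist (s n) (r n) = G.dist (r n) (s n) := SimpleGraph.dist_comm
        have c2 : G.dist (s (n + 1)) (r n) = G.dist (r n) (s (n + 1)) :=
          SimpleGraph.dist_comm
        rcases side hT (ray_adj hs n) (r n) with e | e <;> omega
      rcases ha with ha | ha <;> rcases hb with hb | hb
      · -- both small: Div n, contradiction with constancy
        exfalso
        have hdiv : Div G r s n := ⟨by omega, by omega⟩
        have := (div_succ hT hr hs hdiv).2
        have hD2 := h (n + 2) (by omega)
        omega
      · exact Or.inl ⟨ha, hb⟩
      · exact Or.inr ⟨ha, hb⟩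
      · -- both large: straddle, r n = s n, contradiction
        exfalso
        have hw : G.dist (s (n + 1)) (r n) = G.dist (s n) (r n) + 1 := by
          have c1 : G.dist (s (n + 1)) (r n) = G.dist (r n) (s (n + 1)) :=
            SimpleGraph.dist_comm
          have c2 : G.dist (s n) (r n) = G.dist (r n) (s n) := SimpleGraph.dist_comm
          omega
        have hw' : G.dist (s n) (r (n + 1)) = G.dist (s (n + 1)) (r (n + 1)) + 1 := by
          have c1 : G.dist (s n) (r (n + 1)) = G.dist (r (n + 1)) (s n) :=
            SimpleGraph.dist_comm
          have c2 : G.dist (s (n + 1)) (r (n + 1)) = G.dist (r (n + 1)) (s (n + 1)) :=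
            SimpleGraph.dist_comm
          have hD1' := h (n + 1) (by omega)
          omega
        have := straddle hT (ray_adj hs n).symm hw hw' (ray_adj hr n)
        have : G.dist (r n) (s n) = 0 := by rw [this.1]; exact SimpleGraph.dist_self
        omega
    have hRprop : ∀ n, N ≤ n → G.dist (r (n + 1)) (s n) = c →
        G.dist (r (n + 2)) (s (n + 1)) = c := by
      intro n hn ha
      have hD1 := h (n + 1) (by omega)
      have haway : G.dist (r (n + 1)) (s (n + 2)) = G.dist (r (n + 1)) (s (n + 1)) + 1 :=
        ray_away hT hs (r (n + 1)) n (by omega)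
      rcases hclass (n + 1) (by omega) with ⟨h1, h2⟩ | ⟨h1, h2⟩
      · rw [show n + 1 + 1 = n + 2 from rfl] at h1
        exact h1
      · rw [show n + 1 + 1 = n + 2 from rfl] at h2
        omega
    by_cases hR : ∃ n, N ≤ n ∧ G.dist (r (n + 1)) (s n) = c
    · obtain ⟨n₀, hn₀, hbase⟩ := hR
      have hall : ∀ n, n₀ ≤ n → G.dist (r (n + 1)) (s n) = c := by
        intro n hn
        induction n, hn using Nat.le_induction with
        | base => exact hbase
        | succ n hn ihn => exact hRprop n (by omega) ihn
      have hr' : IsRay G (fun n => r (n + 1)) := by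
        intro m n
        have hmn := hr (m + 1) (n + 1)
        have : (((m + 1 : ℕ) : ℤ) - ((n + 1 : ℕ) : ℤ)).natAbs = ((m : ℤ) - n).natAbs := by
          push_cast; omega
        rw [this] at hmn
        exact hmn
      obtain ⟨a, b, hev⟩ := ih (fun n => r (n + 1)) s hr' hs n₀ fun n hn => hall n hn
      exact ⟨a, b + 1, hev.mono fun n hn => hn⟩
    · push_neg at hR
      have hs' : IsRay G (fun n => s (n + 1)) := by
        intro m n
        have hmn := hs (m + 1) (n + 1)
        have : (((m + 1 : ℕ) : ℤ) - ((n + 1 : ℕ) : ℤ)).natAbs = ((m : ℤ) - n).natAbs := by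
          push_cast; omega
        rw [this] at hmn
        exact hmn
      obtain ⟨a, b, hev⟩ := ih r (fun n => s (n + 1)) hr hs' N (by
        intro n hn
        rcases hclass n hn with ⟨h1, h2⟩ | ⟨h1, h2⟩
        · exact absurd h1 (hR n hn)
        · exact h2)
      exact ⟨a + 1, b, hev.mono fun n hn => hn⟩

theorem exists_div (hT : G.IsTree) {r s : ℕ → V} (hr : IsRay G r) (hs : IsRay G s)
    (h : ¬ Cofinal r s) : ∃ n, Div G r s n := by
  by_contra h2
  push_neg at h2
  have hmono : ∀ n, G.dist (r (n + 1)) (s (n + 1)) ≤ G.dist (r n) (s n) := by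
    intro n
    have c1 : G.dist (s n) (r n) = G.dist (r n) (s n) := SimpleGraph.dist_comm
    have c2 : G.dist (s (n + 1)) (r n) = G.dist (r n) (s (n + 1)) := SimpleGraph.dist_comm
    have e1 := side hT (ray_adj hs n) (r n)
    have e2 := side hT (ray_adj hr n) (s (n + 1))
    rcases e1 with e1 | e1 <;> rcases e2 with e2 | e2 <;> try omega
    -- remaining case: distance increased by 2; show Div n, contradiction
    exfalso
    have hrr : G.dist (r (n + 1)) (r n) = 1 := by
      have := ray_dist hr (n := n) (m := n + 1) (by omega)
      have cc : G.dist (r (n + 1)) (r n) = G.dist (r n) (r (n + 1)) := SimpleGraph.dist_comm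
      omega
    have hss : G.dist (s n) (s (n + 1)) = 1 := by
      have := ray_dist hs (n := n) (m := n + 1) (by omega)
      omega
    have t1 : G.dist (r (n + 1)) (s n) ≤ G.dist (r (n + 1)) (r n) + G.dist (r n) (s n) :=
      hT.isConnected.dist_triangle
    have t2 : G.dist (r (n + 1)) (s (n + 1)) ≤
        G.dist (r (n + 1)) (s n) + G.dist (s n) (s (n + 1)) :=
      hT.isConnected.dist_triangle
    exact h2 n ⟨by omega, by omega⟩
  have hne : (Set.range fun n => G.dist (r n) (s n)).Nonempty := ⟨_, ⟨0, rfl⟩⟩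
  obtain ⟨N, hN⟩ := Nat.sInf_mem hne
  apply h
  apply const_cofinal hT (sInf (Set.range fun n => G.dist (r n) (s n))) r s hr hs N
  intro n hn
  induction n, hn using Nat.le_induction with
  | base => exact hN
  | succ n hn ihn =>
    have h1 := hmono n
    have h2 : sInf (Set.range fun n => G.dist (r n) (s n)) ≤
        G.dist (r (n + 1)) (s (n + 1)) :=
      Nat.sInf_le (Set.mem_range_self (n + 1))
    omega


end TreeAux

end TreeAuxSec

section BoundaryAux

namespace TreeAux

variable {V : Type*} {G : SimpleGraph V}

theorem cofinal_refl (x : ℕ → V) : Cofinal x x := ⟨0, 0, Eventually.of_forall fun _ => rfl⟩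

theorem cofinal_symm {x y : ℕ → V} (h : Cofinal x y) : Cofinal y x := by
  obtain ⟨a, b, h⟩ := h
  exact ⟨b, a, h.mono fun n hn => hn.symm⟩

theorem cofinal_trans {x y z : ℕ → V} (h1 : Cofinal x y) (h2 : Cofinal y z) : Cofinal x z := by
  obtain ⟨a, b, h1⟩ := h1
  obtain ⟨c, d, h2⟩ := h2
  rw [eventually_atTop] at h1 h2
  obtain ⟨N1, h1⟩ := h1
  obtain ⟨N2, h2⟩ := h2
  refine ⟨a + c, d + b, eventually_atTop.mpr ⟨N1 + N2, fun n hn => ?_⟩⟩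
  have e2 := h2 (n + a) (by omega)
  have e3 := h1 (n + d) (by omega)
  have i1 : n + (a + c) = n + a + c := by ring
  have i2 : n + a + d = n + d + a := by ring
  have i3 : n + d + b = n + (d + b) := by ring
  rw [i1, e2, i2, e3, i3]

theorem rayrel_equiv : Equivalence (fun r s : Ray G => Cofinal r.1 s.1) :=
  ⟨fun r => cofinal_refl r.1, cofinal_symm, cofinal_trans⟩

theorem mk_eq_mk {r r' : Ray G} : Boundary.mk G r = Boundary.mk G r' ↔ Cofinal r.1 r'.1 := by
  unfold Boundary.mk
  exact Quot.eq.trans (Equivalence.eqvGen_iff rayrel_equiv)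

theorem mk_mem_shadow {r : ℕ → V} (hr : IsRay G r) (n : ℕ) :
    Boundary.mk G ⟨r, hr⟩ ∈ Shadow G (r n) (r (n + 1)) := by
  refine ⟨⟨r, hr⟩, rfl, eventually_atTop.mpr ⟨n + 1, fun m hm => ?_⟩⟩
  show G.dist (r (n + 1)) (r m) < G.dist (r n) (r m)
  rw [ray_dist hr (show n + 1 ≤ m by omega), ray_dist hr (show n ≤ m by omega)]
  omega

theorem shadow_disjoint (hT : G.IsTree) {u v u' v' : V} (huv : G.Adj u v)
    (hu'v' : G.Adj u' v')
    (h1 : G.dist v v' = G.dist u v' + 1) (h2 : G.dist v v' = G.dist v u' + 1) :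
    ∀ ξ : Boundary G, ξ ∈ Shadow G u v → ξ ∈ Shadow G u' v' → False := by
  rintro ξ ⟨t, ht_eq, ht⟩ ⟨t', ht'_eq, ht'⟩
  obtain ⟨a, b, hco⟩ := mk_eq_mk.mp (ht_eq.trans ht'_eq.symm)
  rw [eventually_atTop] at hco ht ht'
  obtain ⟨N3, hco⟩ := hco
  obtain ⟨N1, ht⟩ := ht
  obtain ⟨N2, ht'⟩ := ht'
  set n := N1 + N2 + N3 with hn
  set w := t.1 (n + b) with hwdef
  have hw' : t'.1 (n + a) = w := hco n (by omega)
  have i1 : G.dist v w < G.dist u w := ht (n + b) (by omega)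
  have i2 : G.dist v' w < G.dist u' w := by
    have := ht' (n + a) (by omega)
    rwa [hw'] at this
  have s1 : G.dist u w = G.dist v w + 1 := by rcases side hT huv w with e | e <;> omega
  have s2 : G.dist u' w = G.dist v' w + 1 := by rcases side hT hu'v' w with e | e <;> omega
  have T1 : G.dist w v' = G.dist v w + 1 + G.dist u v' := cross hT huv s1 h1
  have hy2 : G.dist v' v = G.dist u' v + 1 := by
    have c1 : G.dist v' v = G.dist v v' := SimpleGraph.dist_comm
    have c2 : G.dist u' v = G.dist v u' := SimpleGraph.dist_comm
    omega
  have T2 : G.dist w v = G.dist v' w + 1 + G.dist u' v := cross hT hu'v' s2 hy2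
  have c3 : G.dist w v = G.dist v w := SimpleGraph.dist_comm
  have c4 : G.dist w v' = G.dist v' w := SimpleGraph.dist_comm
  omega

variable {Γ : Type*} [Group Γ] [MulAction Γ V]

theorem smul_mk (hact : IsGraphAction G Γ) (γ : Γ) (t : Ray G) :
    Boundary.smul hact γ (Boundary.mk G t) = Boundary.mk G (raySmul hact γ t) := rfl

theorem shadow_isOpen {u v : V} (huv : G.Adj u v) : IsOpen (Shadow G u v) :=
  TopologicalSpace.GenerateOpen.basic _ ⟨u, v, huv, rfl⟩

theorem fixed_compl_open (hT : G.IsTree) (hact : IsGraphAction G Γ) (γ : Γ) :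
    IsOpen (FixedBoundary hact γ)ᶜ := by
  rw [isOpen_iff_forall_mem_open]
  intro ξ hξ
  obtain ⟨t, ht⟩ := Quot.exists_rep ξ
  have hmove : Boundary.smul hact γ (Boundary.mk G t) ≠ Boundary.mk G t := by
    rw [show Boundary.mk G t = ξ from ht]
    exact hξ
  have hnc : ¬ Cofinal t.1 (raySmul hact γ t).1 := by
    intro hc
    exact hmove (by rw [smul_mk]; exact mk_eq_mk.mpr (cofinal_symm hc))
  obtain ⟨m, hdiv⟩ := exists_div hT t.2 (raySmul hact γ t).2 hnc
  have hadj : G.Adj (t.1 m) (t.1 (m + 1)) := ray_adj t.2 m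
  have hadj' : G.Adj (γ • t.1 m) (γ • t.1 (m + 1)) := (hact γ _ _).mp hadj
  refine ⟨Shadow G (t.1 m) (t.1 (m + 1)), ?_, shadow_isOpen hadj, ?_⟩
  · intro η hη
    simp only [Set.mem_compl_iff]
    intro hfix
    have hfix' : Boundary.smul hact γ η = η := hfix
    obtain ⟨t₂, ht₂, hev⟩ := hη
    have hη2 : Boundary.smul hact γ η ∈ Shadow G (γ • t.1 m) (γ • t.1 (m + 1)) := by
      refine ⟨raySmul hact γ t₂, by rw [← ht₂]; rfl, hev.mono fun k hk => ?_⟩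
      show G.dist (γ • t.1 (m + 1)) (γ • t₂.1 k) < G.dist (γ • t.1 m) (γ • t₂.1 k)
      rw [dist_smul_eq hact, dist_smul_eq hact]
      exact hk
    rw [hfix'] at hη2
    exact shadow_disjoint hT hadj hadj' hdiv.1 hdiv.2 η ⟨t₂, ht₂, hev⟩ hη2
  · rw [← ht]
    exact mk_mem_shadow t.2 m

end TreeAux

end BoundaryAux

theorem statement8 [Countable V] (G : SimpleGraph V) (hT : G.IsTree)
    (hne : Nonempty (Boundary G))
    {Γ : Type*} [Group Γ] [Countable Γ] [MulAction Γ V]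
    (hact : IsGraphAction G Γ) (hslender : SlenderAction hact) :
    ∀ F : Finset Γ, (1 : Γ) ∉ F →
      ∃ ξ : Boundary G, ∀ γ ∈ F, Boundary.smul hact γ ξ ≠ ξ := by
  classical
  intro F hF
  by_contra hcon
  push_neg at hcon
  have hkey : ∀ (F' : Finset Γ), (1 : Γ) ∉ F' →
      interior (⋃ γ ∈ F', FixedBoundary hact γ) = ∅ := by
    intro F'
    induction F' using Finset.induction_on with
    | empty => intro _; simp
    | @insert γ F' hγF ih =>
      intro h1
      have hγ1 : γ ≠ 1 := fun hc => h1 (by rw [← hc]; exact Finset.mem_insert_self γ F')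
      have hBint : interior (⋃ γ ∈ F', FixedBoundary hact γ) = ∅ :=
        ih fun hc => h1 (Finset.mem_insert_of_mem hc)
      have hAint : interior (FixedBoundary hact γ) = ∅ := hslender γ hγ1
      have hA : IsClosed (FixedBoundary hact γ) :=
        isOpen_compl_iff.mp (TreeAux.fixed_compl_open hT hact γ)
      rw [Finset.set_biUnion_insert]
      apply Set.eq_empty_iff_forall_notMem.mpr
      intro ξ hξ
      have hUopen : IsOpen (interior
          (FixedBoundary hact γ ∪ ⋃ γ ∈ F', FixedBoundary hact γ)) := isOpen_interior
      have hsub : interior (FixedBoundary hact γ ∪ ⋃ γ ∈ F', FixedBoundary hact γ) ⊆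
          FixedBoundary hact γ := by
        intro x hx
        by_contra hxA
        have hopen2 : IsOpen (interior
            (FixedBoundary hact γ ∪ ⋃ γ ∈ F', FixedBoundary hact γ) ∩
            (FixedBoundary hact γ)ᶜ) := hUopen.inter hA.isOpen_compl
        have hsubB : interior (FixedBoundary hact γ ∪ ⋃ γ ∈ F', FixedBoundary hact γ) ∩
            (FixedBoundary hact γ)ᶜ ⊆ ⋃ γ ∈ F', FixedBoundary hact γ := fun z hz =>
          (interior_subset hz.1).resolve_left hz.2
        have := interior_maximal hsubB hopen2
        rw [hBint] at this
        exact this ⟨hx, hxA⟩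
      have := interior_maximal hsub hUopen
      rw [hAint] at this
      exact this hξ
  obtain ⟨ξ₀⟩ := hne
  have huniv : (⋃ γ ∈ F, FixedBoundary hact γ) = Set.univ :=
    Set.eq_univ_of_forall fun ξ => by
      obtain ⟨γ, hγ, hfix⟩ := hcon ξ
      exact Set.mem_biUnion hγ hfix
  have : ξ₀ ∈ interior (⋃ γ ∈ F, FixedBoundary hact γ) := by
    rw [huniv, interior_univ]; trivial
  rw [hkey F hF] at this
  exact this

end Statements
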